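/- arXiv:1304.5610 — 4 statements merged into one kernel-verified Lean document; each statement's English description precedes it below -/
import Mathlib

section
/- Consider standard approximate Modified Policy Iteration (MPI) with parameter m ≥ 0 on a finite MDP: starting from v_0 : X → ℝ, for each k ≥ 1 pick π_k greedy with respect to v_{k−1} and set v_k = (T_{π_k})^{m+1} v_{k−1} + ε_k. If there exists ε > 0 such that ‖ε_k‖_∞ ≤ ε for all k ≥ 1, then for every k ≥ 1 the loss of running the stationary policy π_k instead of an optimal policy satisfies ‖v_* − v_{π_k}‖_∞ ≤ (2(γ − γ^k)/(1 − γ)²) · ε + (2γ^k/(1 − γ)) · ‖v_* − v_0‖_∞. -/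
structure MDP (X A : Type) [Fintype X] [Fintype A] where
  P : X → A → X → ℝ
  r : X → A → ℝ
  γ : ℝ
  P_nonneg : ∀ x a y, 0 ≤ P x a y
  P_sum : ∀ x a, ∑ y, P x a y = 1
  γ_pos : 0 < γ
  γ_lt_one : γ < 1

namespace MDP

variable {X A : Type} [Fintype X] [Fintype A]

/-- Bellman operator of a stationary policy. -/
noncomputable def T (M : MDP X A) (π : X → A) (v : X → ℝ) : X → ℝ :=
  fun x => M.r x (π x) + M.γ * ∑ y, M.P x (π x) y * v y

/-- Action-value function. -/
noncomputable def Q (M : MDP X A) (v : X → ℝ) (x : X) (a : A) : ℝ :=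
  M.r x a + M.γ * ∑ y, M.P x a y * v y

/-- `π` is greedy with respect to `v` (action form). -/
def IsGreedy (M : MDP X A) (π : X → A) (v : X → ℝ) : Prop :=
  ∀ x, M.T π v x = ⨆ a : A, M.Q v x a

/-- `π` is greedy with respect to `v` (componentwise max over policies form). -/
def IsGreedyPol (M : MDP X A) (π : X → A) (v : X → ℝ) : Prop :=
  ∀ x, M.T π v x = ⨆ π' : X → A, M.T π' v x

/-- Composed Bellman operator `T_{π_k} T_{π_{k-1}} ⋯ T_{π_{k-n+1}}`. -/
noncomputable def Tcomp (M : MDP X A) (π : ℤ → X → A) : ℕ → ℤ → (X → ℝ) → (X → ℝ)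
  | 0, _ => id
  | (n+1), k => fun v => M.T (π k) (M.Tcomp π n (k-1) v)

/-- Transition kernel of a stationary policy, as a matrix. -/
def Pmat (M : MDP X A) (π : X → A) : Matrix X X ℝ :=
  Matrix.of fun x y => M.P x (π x) y

/-- Composed kernel `P_{π_k} P_{π_{k-1}} ⋯ P_{π_{k-n+1}}`. -/
noncomputable def Pcomp (M : MDP X A) [DecidableEq X] (π : ℤ → X → A) : ℕ → ℤ → Matrix X X ℝ
  | 0, _ => 1
  | (n+1), k => M.Pmat (π k) * M.Pcomp π n (k-1)

/-- `n`-fold products `(γ P_{π_1}) ⋯ (γ P_{π_n})`. -/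
def prodSet (M : MDP X A) [DecidableEq X] : ℕ → Set (Matrix X X ℝ)
  | 0 => {1}
  | (n+1) => {Q | ∃ (π : X → A) (Q' : Matrix X X ℝ), Q' ∈ M.prodSet n ∧ Q = (M.γ • M.Pmat π) * Q'}

/-- `𝕡_n`: convex combinations of `n`-fold products of discounted kernels. -/
noncomputable def Gamma (M : MDP X A) [DecidableEq X] (n : ℕ) : Set (Matrix X X ℝ) :=
  convexHull ℝ (M.prodSet n)

end MDP

/-- Residual `b_k = T_{π_{k+1}} v_k − T_{π_{k+1},ℓ} T_{π_{k+1}} v_k`. -/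
noncomputable def bres {X A : Type} [Fintype X] [Fintype A] (M : MDP X A) (π : ℤ → X → A) (ℓ : ℕ)
    (v : ℕ → X → ℝ) (k : ℕ) : X → ℝ :=
  fun x => M.T (π ((k : ℤ) + 1)) (v k) x
    - M.Tcomp π ℓ ((k : ℤ) + 1) (M.T (π ((k : ℤ) + 1)) (v k)) x

/-- Distance `d_k = v_* − v_k + ε_k`. -/
noncomputable def dres {X : Type} (vstar : X → ℝ) (v err : ℕ → X → ℝ) (k : ℕ) : X → ℝ :=
  fun x => vstar x - v k x + err k x


set_option linter.unusedSectionVars false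
section Aux

variable {X A : Type} [Fintype X] [Fintype A] [Nonempty X] [Nonempty A] (M : MDP X A)

lemma T_step (π : X → A) (u w : X → ℝ) (c : ℝ) (h : ∀ x, u x ≤ w x + c) (x : X) :
    M.T π u x ≤ M.T π w x + M.γ * c := by
  have hsum : ∑ y, M.P x (π x) y * u y ≤ ∑ y, M.P x (π x) y * (w y + c) :=
    Finset.sum_le_sum fun y _ => mul_le_mul_of_nonneg_left (h y) (M.P_nonneg x (π x) y)
  have h2 : ∑ y, M.P x (π x) y * (w y + c) = (∑ y, M.P x (π x) y * w y) + c := by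
    simp [mul_add, Finset.sum_add_distrib, ← Finset.sum_mul, M.P_sum]
  have h3 := mul_le_mul_of_nonneg_left (hsum.trans_eq h2) M.γ_pos.le
  simp only [MDP.T]
  nlinarith [h3]

lemma T_iter (π : X → A) (u w : X → ℝ) (c : ℝ) (h : ∀ x, u x ≤ w x + c) (n : ℕ) :
    ∀ x, (M.T π)^[n] u x ≤ (M.T π)^[n] w x + M.γ ^ n * c := by
  induction n with
  | zero => simpa using h
  | succ n ih =>
    intro x
    rw [Function.iterate_succ_apply', Function.iterate_succ_apply']
    have h1 := T_step M π _ _ _ ih x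
    calc M.T π ((M.T π)^[n] u) x ≤ M.T π ((M.T π)^[n] w) x + M.γ * (M.γ ^ n * c) := h1
      _ = M.T π ((M.T π)^[n] w) x + M.γ ^ (n + 1) * c := by ring

lemma greedy_ge (π πg : X → A) (w : X → ℝ) (hg : M.IsGreedy πg w) (x : X) :
    M.T π w x ≤ M.T πg w x := by
  rw [hg x]
  exact le_ciSup (f := fun a => M.Q w x a) (Set.Finite.bddAbove (Set.finite_range _)) (π x)

lemma iter_gap (π : X → A) (w : X → ℝ) (B : ℝ) (h : ∀ x, w x ≤ M.T π w x + B) (j : ℕ) :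
    ∀ x, w x ≤ (M.T π)^[j] w x + (∑ i ∈ Finset.range j, M.γ ^ i) * B := by
  induction j with
  | zero => intro x; simp
  | succ j ih =>
    intro x
    have h2 := T_iter M π w (M.T π w) B h j x
    rw [← Function.iterate_succ_apply] at h2
    rw [Finset.sum_range_succ]
    have h1 := ih x
    nlinarith [h2, h1]

lemma le_vpi (vpi : (X → A) → X → ℝ) (hvpi : ∀ π : X → A, M.T π (vpi π) = vpi π)
    (π : X → A) (w : X → ℝ) (h : ∀ x, w x ≤ M.T π w x) : ∀ x, w x ≤ vpi π x := by
  obtain ⟨x0, hx0⟩ := Finite.exists_max (fun x => w x - vpi π x)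
  have hb : ∀ x, w x ≤ vpi π x + (w x0 - vpi π x0) := fun x => by
    have := hx0 x; linarith
  have h1 := T_step M π w (vpi π) (w x0 - vpi π x0) hb x0
  have h2 : M.T π (vpi π) x0 = vpi π x0 := congrFun (hvpi π) x0
  rw [h2] at h1
  have hcγ : w x0 - vpi π x0 ≤ M.γ * (w x0 - vpi π x0) := by have := h x0; linarith
  have hc0 : w x0 - vpi π x0 ≤ 0 := by nlinarith [M.γ_lt_one, M.γ_pos]
  intro x
  have := hx0 x
  linarith

lemma exists_opt (vpi : (X → A) → X → ℝ) (hvpi : ∀ π : X → A, M.T π (vpi π) = vpi π) :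
    ∃ πs : X → A, ∀ (π : X → A) (x : X), vpi π x ≤ vpi πs x := by
  classical
  obtain ⟨πs, hπs⟩ := Finite.exists_max (fun π : X → A => ∑ x, vpi π x)
  refine ⟨πs, fun π x => ?_⟩
  set π'' := fun y => if vpi π y ≤ vpi πs y then πs y else π y with hπ''
  set w := fun y => max (vpi πs y) (vpi π y) with hw
  have hTw : ∀ y, w y ≤ M.T π'' w y := by
    intro y
    by_cases hy : vpi π y ≤ vpi πs y
    · have hT : M.T π'' w y = M.T πs w y := by simp only [MDP.T, hπ'', if_pos hy]
      have h1 := T_step M πs (vpi πs) w 0 (fun z => by simp [hw, le_max_left]) y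
      have h2 : M.T πs (vpi πs) y = vpi πs y := congrFun (hvpi πs) y
      have hwy : w y = vpi πs y := max_eq_left hy
      rw [hT, hwy]; linarith
    · have hT : M.T π'' w y = M.T π w y := by simp only [MDP.T, hπ'', if_neg hy]
      have h1 := T_step M π (vpi π) w 0 (fun z => by simp [hw, le_max_right]) y
      have h2 : M.T π (vpi π) y = vpi π y := congrFun (hvpi π) y
      have hwy : w y = vpi π y := max_eq_right (le_of_not_ge hy)
      rw [hT, hwy]; linarith
  have hwle := le_vpi M vpi hvpi π'' w hTw
  have hps_le : ∀ y, vpi πs y ≤ vpi π'' y := fun y => (le_max_left _ _).trans (hwle y)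
  have heq : ∀ y ∈ Finset.univ, vpi πs y = vpi π'' y := by
    rw [← Finset.sum_eq_sum_iff_of_le (fun y _ => hps_le y)]
    exact le_antisymm (Finset.sum_le_sum fun y _ => hps_le y) (hπs π'')
  have h3 := heq x (Finset.mem_univ x)
  have hx := (le_max_right (vpi πs x) (vpi π x)).trans (hwle x)
  linarith

end Aux

noncomputable def BbS (γ Δ ε : ℝ) (m : ℕ) : ℕ → ℝ
  | 0 => (1 + γ) * Δ
  | n+1 => γ ^ (m+1) * BbS γ Δ ε m n + (1 + γ) * ε

noncomputable def DbS (γ Δ ε g : ℝ) (m : ℕ) : ℕ → ℝ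
  | 0 => Δ
  | n+1 => γ * DbS γ Δ ε g m n + (if n = 0 then 0 else γ * ε) + g * BbS γ Δ ε m n

noncomputable def FS (γ : ℝ) (n : ℕ) : ℝ :=
  if n = 0 then 0 else 2 * (γ - γ ^ (n+1)) / (1 - γ) ^ 2 - γ


/-- Performance bound for standard approximate MPI (Theorem 1 of the paper). -/
theorem mpi_standard_performance_bound
    {X A : Type} [Fintype X] [Fintype A] [Nonempty X] [Nonempty A]
    (M : MDP X A)
    (vpi : (X → A) → X → ℝ) (hvpi : ∀ π : X → A, M.T π (vpi π) = vpi π)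
    (vstar : X → ℝ) (hvstar : ∀ x, vstar x = ⨆ π : X → A, vpi π x)
    (m : ℕ) (v : ℕ → X → ℝ) (π : ℕ → X → A) (err : ℕ → X → ℝ)
    (hgreedy : ∀ k : ℕ, 1 ≤ k → M.IsGreedy (π k) (v (k - 1)))
    (hv : ∀ k : ℕ, 1 ≤ k → v k = fun x => (M.T (π k))^[m + 1] (v (k - 1)) x + err k x)
    (ε : ℝ) (hε : 0 < ε) (herr : ∀ k : ℕ, 1 ≤ k → (⨆ x, |err k x|) ≤ ε)
    (k : ℕ) (hk : 1 ≤ k) :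
    (⨆ x, |vstar x - vpi (π k) x|) ≤
      2 * (M.γ - M.γ ^ k) / (1 - M.γ) ^ 2 * ε
        + 2 * M.γ ^ k / (1 - M.γ) * (⨆ x, |vstar x - v 0 x|) := by
  classical
  obtain ⟨πs, hopt⟩ := exists_opt M vpi hvpi
  have hge : ∀ (p : X → A) (x : X), vpi p x ≤ vstar x := fun p x => by
    rw [hvstar]
    exact le_ciSup (f := fun q : X → A => vpi q x)
      (Set.Finite.bddAbove (Set.finite_range _)) p
  have hvs_eq : vstar = vpi πs := by
    funext x
    refine le_antisymm ?_ (hge πs x)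
    rw [hvstar]
    exact ciSup_le fun p => hopt p x
  have hfix : ∀ x, M.T πs vstar x = vstar x := by
    intro x; rw [hvs_eq]; exact congrFun (hvpi πs) x
  set Δ := ⨆ x, |vstar x - v 0 x| with hΔdef
  have hΔ : ∀ x, |vstar x - v 0 x| ≤ Δ := fun x =>
    le_ciSup (f := fun x => |vstar x - v 0 x|) (Set.Finite.bddAbove (Set.finite_range _)) x
  have herr' : ∀ n : ℕ, ∀ x, |err (n+1) x| ≤ ε := fun n x =>
    (le_ciSup (f := fun x => |err (n+1) x|) (Set.Finite.bddAbove (Set.finite_range _)) x).trans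
      (herr (n+1) (by omega))
  have hγ1 : M.γ < 1 := M.γ_lt_one
  have hγ0 : (0:ℝ) < M.γ := M.γ_pos
  have hγd : (0:ℝ) < 1 - M.γ := by linarith
  have hv' : ∀ n : ℕ, v (n+1) = fun x => (M.T (π (n+1)))^[m+1] (v n) x + err (n+1) x := by
    intro n; have := hv (n+1) (by omega); simpa using this
  have hgreedy' : ∀ n : ℕ, M.IsGreedy (π (n+1)) (v n) := by
    intro n; have := hgreedy (n+1) (by omega); simpa using this
  set g : ℝ := (∑ i ∈ Finset.range m, M.γ ^ i) * M.γ with hgdef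
  have hg_eq : g = (M.γ - M.γ ^ (m+1)) / (1 - M.γ) := by
    rw [hgdef, geom_sum_eq (by linarith : M.γ ≠ 1), pow_succ, div_mul_eq_mul_div,
      div_eq_div_iff (by linarith : M.γ - 1 ≠ 0) (by linarith : (1:ℝ) - M.γ ≠ 0)]
    ring
  set Bb : ℕ → ℝ := BbS M.γ Δ ε m with hBbdef
  set Db : ℕ → ℝ := DbS M.γ Δ ε g m with hDbdef
  have hBb0 : Bb 0 = (1 + M.γ) * Δ := rfl
  have hBbs : ∀ n, Bb (n+1) = M.γ ^ (m+1) * Bb n + (1 + M.γ) * ε := fun n => rfl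
  have hDb0 : Db 0 = Δ := rfl
  have hDbs : ∀ n, Db (n+1) = M.γ * Db n + (if n = 0 then 0 else M.γ * ε) + g * Bb n :=
    fun n => rfl
  -- b-step
  have bstep : ∀ (n : ℕ) (B : ℝ), (∀ x, v n x - M.T (π (n+1)) (v n) x ≤ B) →
      ∀ x, v (n+1) x - M.T (π (n+2)) (v (n+1)) x ≤ M.γ ^ (m+1) * B + (1 + M.γ) * ε := by
    intro n B hB x
    have hg2 := greedy_ge M (π (n+1)) (π (n+2)) (v (n+1)) (hgreedy' (n+1)) x
    have e_ge : ∀ y, (M.T (π (n+1)))^[m+1] (v n) y ≤ v (n+1) y + ε := by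
      intro y
      have h := congrFun (hv' n) y
      have := (abs_le.mp (herr' n y)).1
      simp only [h]
      linarith
    have h1 := T_step M (π (n+1)) ((M.T (π (n+1)))^[m+1] (v n)) (v (n+1)) ε e_ge x
    have hB' : ∀ y, v n y ≤ M.T (π (n+1)) (v n) y + B := fun y => by linarith [hB y]
    have h2 := T_iter M (π (n+1)) (v n) (M.T (π (n+1)) (v n)) B hB' (m+1) x
    have hsw : (M.T (π (n+1)))^[m+1] (M.T (π (n+1)) (v n))
        = M.T (π (n+1)) ((M.T (π (n+1)))^[m+1] (v n)) :=
      (Function.iterate_succ_apply (M.T (π (n+1))) (m+1) (v n)).symm.trans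
        (Function.iterate_succ_apply' (M.T (π (n+1))) (m+1) (v n))
    rw [hsw] at h2
    have e_le : v (n+1) x ≤ (M.T (π (n+1)))^[m+1] (v n) x + ε := by
      have h := congrFun (hv' n) x
      have := (abs_le.mp (herr' n x)).2
      simp only [h]
      linarith
    linarith [hg2, h1, h2, e_le]
  -- d-step
  have dstep : ∀ (n : ℕ) (B D : ℝ), (∀ x, vstar x - v n x ≤ D) →
      (∀ x, v n x - M.T (π (n+1)) (v n) x ≤ B) →
      ∀ x, vstar x - (M.T (π (n+1)))^[m+1] (v n) x ≤ M.γ * D + g * B := by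
    intro n B D hD hB x
    have hgr := greedy_ge M πs (π (n+1)) (v n) (hgreedy' n) x
    have h1 := T_step M πs vstar (v n) D (fun y => by linarith [hD y]) x
    rw [hfix x] at h1
    have hw' : ∀ y, M.T (π (n+1)) (v n) y ≤ M.T (π (n+1)) (M.T (π (n+1)) (v n)) y + M.γ * B :=
      fun y => T_step M (π (n+1)) (v n) (M.T (π (n+1)) (v n)) B (fun z => by linarith [hB z]) y
    have h2 := iter_gap M (π (n+1)) (M.T (π (n+1)) (v n)) (M.γ * B) hw' m x
    rw [← Function.iterate_succ_apply] at h2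
    have hgB : (∑ i ∈ Finset.range m, M.γ ^ i) * (M.γ * B) = g * B := by rw [hgdef]; ring
    rw [hgB] at h2
    linarith [hgr, h1, h2]
  -- fixed point of iterates
  have hfixiter : ∀ (p : X → A) (j : ℕ), (M.T p)^[j] (vpi p) = vpi p := by
    intro p j
    induction j with
    | zero => rfl
    | succ j ih => rw [Function.iterate_succ_apply', ih, hvpi p]
  -- value lower bound
  have vlow : ∀ (p : X → A) (w : X → ℝ) (B : ℝ), (∀ x, w x - M.T p w x ≤ B) →
      ∀ x, w x - vpi p x ≤ B / (1 - M.γ) := by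
    intro p w B hB
    obtain ⟨x0, hx0⟩ := Finite.exists_max (fun x => w x - vpi p x)
    have h1 := T_step M p w (vpi p) (w x0 - vpi p x0) (fun y => by linarith [hx0 y]) x0
    have h2 : M.T p (vpi p) x0 = vpi p x0 := congrFun (hvpi p) x0
    rw [h2] at h1
    have hc : w x0 - vpi p x0 ≤ B + M.γ * (w x0 - vpi p x0) := by linarith [hB x0]
    have hcB : w x0 - vpi p x0 ≤ B / (1 - M.γ) := by rw [le_div_iff₀ hγd]; nlinarith
    intro x
    linarith [hx0 x]
  -- base residual bound
  have hb0 : ∀ x, v 0 x - M.T (π 1) (v 0) x ≤ Bb 0 := by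
    intro x
    have hgr := greedy_ge M πs (π 1) (v 0) (hgreedy' 0) x
    have h1 := T_step M πs vstar (v 0) Δ (fun y => by linarith [(abs_le.mp (hΔ y)).2]) x
    rw [hfix x] at h1
    have h2 := (abs_le.mp (hΔ x)).1
    rw [hBb0]
    nlinarith [hgr, h1, h2]
  -- main componentwise induction
  have main : ∀ n : ℕ, (∀ x, vstar x - (M.T (π (n+1)))^[m+1] (v n) x ≤ Db (n+1)) ∧
      (∀ x, v (n+1) x - M.T (π (n+2)) (v (n+1)) x ≤ Bb (n+1)) := by
    intro n
    induction n with
    | zero =>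
      constructor
      · intro x
        have hD0 : ∀ y, vstar y - v 0 y ≤ Δ := fun y => (abs_le.mp (hΔ y)).2
        have h := dstep 0 (Bb 0) Δ hD0 hb0 x
        rw [hDbs 0, hDb0, if_pos rfl]
        linarith
      · intro x
        have := bstep 0 (Bb 0) hb0 x
        rw [hBbs 0]
        linarith
    | succ n ih =>
      have hDv : ∀ x, vstar x - v (n+1) x ≤ Db (n+1) + ε := by
        intro x
        have h1 := ih.1 x
        have h2 := (abs_le.mp (herr' n x)).1
        have h3 := congrFun (hv' n) x
        rw [h3]
        linarith
      constructor
      · intro x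
        have h := dstep (n+1) (Bb (n+1)) (Db (n+1) + ε) hDv ih.2 x
        rw [hDbs (n+1), if_neg (Nat.succ_ne_zero n)]
        linarith
      · intro x
        have := bstep (n+1) (Bb (n+1)) ih.2 x
        rw [hBbs (n+1)]
        linarith
  -- loss bound
  have hloss : ∀ n : ℕ, ∀ x, vstar x - vpi (π (n+1)) x ≤
      Db (n+1) + M.γ ^ (m+1) / (1 - M.γ) * Bb n := by
    intro n x
    have hBn : ∀ y, v n y - M.T (π (n+1)) (v n) y ≤ Bb n := by
      cases n with
      | zero => exact hb0
      | succ n' => exact (main n').2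
    have hD := (main n).1 x
    have hvl := vlow (π (n+1)) (v n) (Bb n) hBn
    have h2 := T_iter M (π (n+1)) (v n) (vpi (π (n+1))) (Bb n / (1 - M.γ))
      (fun y => by linarith [hvl y]) (m+1) x
    rw [show (M.T (π (n+1)))^[m+1] (vpi (π (n+1))) = vpi (π (n+1)) from hfixiter _ _] at h2
    have hcoef : M.γ ^ (m+1) * (Bb n / (1 - M.γ)) = M.γ ^ (m+1) / (1 - M.γ) * Bb n := by ring
    rw [hcoef] at h2
    linarith [hD, h2]
  -- scalar combination identity
  have hgh : g + M.γ ^ (m+1) / (1 - M.γ) = M.γ / (1 - M.γ) := by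
    rw [hg_eq]
    field_simp
    ring
  -- scalar closed-form bound
  have hMb : ∀ n : ℕ, M.γ * Db n + M.γ / (1 - M.γ) * Bb n ≤
      2 * M.γ ^ (n+1) / (1 - M.γ) * Δ + FS M.γ n * ε := by
    intro n
    induction n with
    | zero =>
      rw [hDb0, hBb0]
      have h1 : M.γ * Δ + M.γ / (1 - M.γ) * ((1 + M.γ) * Δ)
          = 2 * M.γ ^ (0+1) / (1 - M.γ) * Δ := by
        field_simp
        ring
      rw [h1, FS, if_pos rfl]
      simp
    | succ n ih =>
      rw [hDbs n, hBbs n]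
      have hc : M.γ * g + M.γ / (1 - M.γ) * M.γ ^ (m+1) = M.γ * (M.γ / (1 - M.γ)) := by
        linear_combination M.γ * hgh
      have key : M.γ * (M.γ * Db n + (if n = 0 then 0 else M.γ * ε) + g * Bb n)
            + M.γ / (1 - M.γ) * (M.γ ^ (m+1) * Bb n + (1 + M.γ) * ε)
          = M.γ * (M.γ * Db n + M.γ / (1 - M.γ) * Bb n)
            + M.γ * (if n = 0 then 0 else M.γ * ε) + M.γ * (1 + M.γ) / (1 - M.γ) * ε := by
        linear_combination Bb n * hc
      rw [key]
      have hmul := mul_le_mul_of_nonneg_left ih hγ0.le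
      have hΔc : M.γ * (2 * M.γ ^ (n+1) / (1 - M.γ) * Δ) = 2 * M.γ ^ (n+1+1) / (1 - M.γ) * Δ := by
        field_simp
        ring
      have hF : M.γ * (FS M.γ n * ε) + M.γ * (if n = 0 then 0 else M.γ * ε)
          + M.γ * (1 + M.γ) / (1 - M.γ) * ε = FS M.γ (n+1) * ε := by
        rcases Nat.eq_zero_or_pos n with hn | hn
        · subst hn
          rw [FS, if_pos rfl, if_pos rfl, FS, if_neg (Nat.succ_ne_zero 0)]
          field_simp
          ring
        · have hn0 : n ≠ 0 := by omega
          rw [FS, if_neg hn0, if_neg hn0, FS, if_neg (Nat.succ_ne_zero n)]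
          field_simp
          ring
      linarith [hmul, hΔc.le, hΔc.ge, hF.le, hF.ge]
  -- conclude
  obtain ⟨n, rfl⟩ : ∃ n, k = n + 1 := ⟨k - 1, by omega⟩
  refine ciSup_le fun x => ?_
  rw [abs_of_nonneg (by linarith [hge (π (n+1)) x] : (0:ℝ) ≤ vstar x - vpi (π (n+1)) x)]
  have h1 := hloss n x
  have h2 : Db (n+1) + M.γ ^ (m+1) / (1 - M.γ) * Bb n ≤
      2 * (M.γ - M.γ ^ (n+1)) / (1 - M.γ) ^ 2 * ε + 2 * M.γ ^ (n+1) / (1 - M.γ) * Δ := by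
    have hM := hMb n
    have hgh' : g * Bb n + M.γ ^ (m+1) / (1 - M.γ) * Bb n = M.γ / (1 - M.γ) * Bb n := by
      linear_combination Bb n * hgh
    rw [hDbs n]
    rcases Nat.eq_zero_or_pos n with hn | hn
    · subst hn
      rw [if_pos rfl]
      rw [FS, if_pos rfl] at hM
      have hz : 2 * (M.γ - M.γ ^ (0+1)) / (1 - M.γ) ^ 2 * ε = 0 := by
        rw [pow_one]
        simp
      rw [hz]
      linarith [hM, hgh']
    · have hn0 : n ≠ 0 := by omega
      rw [if_neg hn0]
      rw [FS, if_neg hn0] at hM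
      have hεc : (2 * (M.γ - M.γ ^ (n+1)) / (1 - M.γ) ^ 2 - M.γ) * ε + M.γ * ε
          = 2 * (M.γ - M.γ ^ (n+1)) / (1 - M.γ) ^ 2 * ε := by ring
      linarith [hM, hgh', hεc.le, hεc.ge]
  linarith [h1, h2]
end

section
/- In non-stationary approximate MPI with parameters m ≥ 0 and ℓ ≥ 1 on a finite MDP, the initial residual b_0 = T_{π_1} v_0 − (T_{π_1})^ℓ T_{π_1} v_0 satisfies the pointwise inequality b_0 ≤ ∑_{i=1}^{ℓ} (γ P_{π_1})^{i} (γ P_{π_*} − I) d_0, where π_* is any optimal policy (i.e., any policy with v_{π_*} = v_*), π_1 is the first policy generated by MPI (greedy with respect to v_0), and d_0 = v_* − v_0. -/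
section Aux
variable {X A : Type} [Fintype X] [Fintype A] [DecidableEq X]

lemma pow_entries_nonneg (M : MDP X A) (π : X → A) (i : ℕ) :
    ∀ x y, 0 ≤ ((M.γ • M.Pmat π) ^ i) x y := by
  induction i with
  | zero => intro x y; simp [Matrix.one_apply]; positivity
  | succ n ih =>
    intro x y
    rw [pow_succ, Matrix.mul_apply]
    apply Finset.sum_nonneg
    intro z _
    exact mul_nonneg (ih x z) (by
      simp only [Matrix.smul_apply, MDP.Pmat, Matrix.of_apply, smul_eq_mul]
      exact mul_nonneg M.γ_pos.le (M.P_nonneg z (π z) y))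

lemma mulVec_mono (Q : Matrix X X ℝ) (hQ : ∀ x y, 0 ≤ Q x y) {u w : X → ℝ}
    (h : ∀ y, u y ≤ w y) : ∀ x, Q.mulVec u x ≤ Q.mulVec w x := by
  intro x
  simp only [Matrix.mulVec, dotProduct]
  exact Finset.sum_le_sum fun y _ => mul_le_mul_of_nonneg_left (h y) (hQ x y)

lemma T_sub (M : MDP X A) (π : X → A) (u w : X → ℝ) (x : X) :
    M.T π u x - M.T π w x = (M.γ • M.Pmat π).mulVec (fun y => u y - w y) x := by
  simp only [MDP.T, Matrix.mulVec, dotProduct, Matrix.smul_apply, MDP.Pmat,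
    Matrix.of_apply, smul_eq_mul]
  rw [add_sub_add_left_eq_sub, ← mul_sub, ← Finset.sum_sub_distrib, Finset.mul_sum]
  exact Finset.sum_congr rfl fun y _ => by ring

lemma iterate_T_sub (M : MDP X A) (π : X → A) (k : ℕ) (u w : X → ℝ) (x : X) :
    (M.T π)^[k] u x - (M.T π)^[k] w x
      = ((M.γ • M.Pmat π) ^ k).mulVec (fun y => u y - w y) x := by
  induction k generalizing x with
  | zero => simp [Matrix.one_mulVec]
  | succ n ih =>
    rw [Function.iterate_succ_apply', Function.iterate_succ_apply', T_sub,
      pow_succ', ← Matrix.mulVec_mulVec]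
    congr 1
    ext y
    exact ih y

end Aux

/-- Bound on the initial residual `b_0` in terms of `d_0 = v_* − v_0`. -/
theorem mpi_initial_residual_bound
    {X A : Type} [Fintype X] [Fintype A] [Nonempty X] [Nonempty A] [DecidableEq X]
    (M : MDP X A)
    (vpi : (X → A) → X → ℝ) (hvpi : ∀ π : X → A, M.T π (vpi π) = vpi π)
    (vstar : X → ℝ) (hvstar : ∀ x, vstar x = ⨆ π : X → A, vpi π x)
    (πstar : X → A) (hopt : vpi πstar = vstar)
    (ℓ : ℕ) (hℓ : 1 ≤ ℓ)
    (v0 : X → ℝ) (π1 : X → A) (hgreedy : M.IsGreedyPol π1 v0) :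
    ∀ x, M.T π1 v0 x - (M.T π1)^[ℓ] (M.T π1 v0) x ≤
      ∑ i ∈ Finset.Icc 1 ℓ,
        ((M.γ • M.Pmat π1) ^ i * (M.γ • M.Pmat πstar - (1 : Matrix X X ℝ))).mulVec
          (fun y => vstar y - v0 y) x := by
  intro x
  have hfix : M.T πstar vstar = vstar := hopt ▸ hvpi πstar
  have hkey : ∀ y, v0 y - M.T π1 v0 y ≤
      (M.γ • M.Pmat πstar - (1 : Matrix X X ℝ)).mulVec (fun z => vstar z - v0 z) y := by
    intro y
    have h1 : M.T πstar v0 y ≤ M.T π1 v0 y := by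
      rw [hgreedy y]
      exact le_ciSup (f := fun π' : X → A => M.T π' v0 y)
        (Set.Finite.bddAbove (Set.finite_range _)) πstar
    have hf := congrFun hfix y
    simp only [MDP.T] at hf h1
    have e1 : (M.γ • M.Pmat πstar - 1).mulVec (fun z => vstar z - v0 z) y
        = M.γ * ∑ z, M.P y (πstar y) z * vstar z
          - M.γ * ∑ z, M.P y (πstar y) z * v0 z - (vstar y - v0 y) := by
      rw [Matrix.sub_mulVec, Matrix.one_mulVec]
      simp only [Pi.sub_apply, Matrix.mulVec, dotProduct, Matrix.smul_apply,
        MDP.Pmat, Matrix.of_apply, smul_eq_mul, mul_assoc, mul_sub,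
        Finset.sum_sub_distrib, ← Finset.mul_sum]
    simp only [MDP.T]
    rw [e1]
    linarith
  have hterm : ∀ k : ℕ, (M.T π1)^[k] (M.T π1 v0) x - (M.T π1)^[k+1] (M.T π1 v0) x
      = ((M.γ • M.Pmat π1) ^ (k+1)).mulVec (fun y => v0 y - M.T π1 v0 y) x := by
    intro k
    rw [Function.iterate_succ_apply, iterate_T_sub, pow_succ, ← Matrix.mulVec_mulVec]
    congr 1
    ext y
    exact T_sub M π1 v0 (M.T π1 v0) y
  have htel : M.T π1 v0 x - (M.T π1)^[ℓ] (M.T π1 v0) x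
      = ∑ k ∈ Finset.range ℓ,
          ((M.T π1)^[k] (M.T π1 v0) x - (M.T π1)^[k+1] (M.T π1 v0) x) := by
    rw [Finset.sum_range_sub' (f := fun k => (M.T π1)^[k] (M.T π1 v0) x)]
    simp
  rw [htel]
  have hle : ∀ k ∈ Finset.range ℓ,
      (M.T π1)^[k] (M.T π1 v0) x - (M.T π1)^[k+1] (M.T π1 v0) x
      ≤ (((M.γ • M.Pmat π1) ^ (k+1)) * (M.γ • M.Pmat πstar - (1 : Matrix X X ℝ))).mulVec
          (fun y => vstar y - v0 y) x := by
    intro k _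
    rw [hterm k, ← Matrix.mulVec_mulVec]
    exact mulVec_mono _ (pow_entries_nonneg M π1 (k+1)) hkey x
  refine le_trans (Finset.sum_le_sum hle) (le_of_eq ?_)
  rw [show Finset.Icc 1 ℓ = Finset.Ico 1 (ℓ + 1) by rw [Finset.Ico_add_one_right_eq_Icc],
    Finset.sum_Ico_eq_sum_range]
  refine Finset.sum_congr (by simp) fun k _ => by rw [Nat.add_comm 1 k]
end

section
/- (One-step residual recursion.) In non-stationary approximate MPI with parameters m ≥ 0 and ℓ ≥ 1 on a finite MDP, for every k ≥ 1 the residual satisfies the pointwise inequality b_k ≤ γ P_{π_{k+1}} ( (γ^ℓ P_{k,ℓ})^m b_{k−1} + (I − γ^ℓ P_{k,ℓ}) ε_k ), where P_{k,ℓ} = P_{π_k} P_{π_{k−1}} ⋯ P_{π_{k−ℓ+1}}. -/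
section Aux

variable {X A : Type} [Fintype X] [Fintype A] [DecidableEq X]

lemma aux_T_add (M : MDP X A) (π0 : X → A) (u w : X → ℝ) :
    M.T π0 (u + w) = M.T π0 u + (M.γ • M.Pmat π0).mulVec w := by
  funext x
  simp only [MDP.T, MDP.Pmat, Matrix.smul_mulVec, Pi.add_apply, Pi.smul_apply,
    Matrix.mulVec, dotProduct, Matrix.of_apply, smul_eq_mul, mul_add,
    Finset.sum_add_distrib]
  ring

lemma aux_T_mono (M : MDP X A) (π0 : X → A) {u w : X → ℝ} (h : u ≤ w) :
    M.T π0 u ≤ M.T π0 w := by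
  intro x
  simp only [MDP.T]
  have hs : ∑ y, M.P x (π0 x) y * u y ≤ ∑ y, M.P x (π0 x) y * w y :=
    Finset.sum_le_sum fun y _ => mul_le_mul_of_nonneg_left (h y) (M.P_nonneg x (π0 x) y)
  exact add_le_add_right (mul_le_mul_of_nonneg_left hs M.γ_pos.le) _

lemma aux_mulVec_mono {B : Matrix X X ℝ} (hB : ∀ i j, 0 ≤ B i j) {u w : X → ℝ} (h : u ≤ w) :
    B.mulVec u ≤ B.mulVec w := by
  intro i
  simp only [Matrix.mulVec, dotProduct]
  exact Finset.sum_le_sum fun j _ => mul_le_mul_of_nonneg_left (h j) (hB i j)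

lemma aux_Tcomp_add (M : MDP X A) (π : ℤ → X → A) :
    ∀ (n : ℕ) (k : ℤ) (u w : X → ℝ),
      M.Tcomp π n k (u + w) = M.Tcomp π n k u + (M.γ ^ n • M.Pcomp π n k).mulVec w := by
  intro n
  induction n with
  | zero =>
    intro k u w
    simp [MDP.Tcomp, MDP.Pcomp, Matrix.one_mulVec]
  | succ n ih =>
    intro k u w
    simp only [MDP.Tcomp, MDP.Pcomp]
    rw [ih (k - 1) u w, aux_T_add]
    congr 1
    funext x
    simp only [Matrix.smul_mul, Matrix.smul_mulVec, Matrix.mulVec_smul, Matrix.mulVec_mulVec,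
      Pi.smul_apply, smul_eq_mul, pow_succ]
    ring

lemma aux_Tcomp_sub (M : MDP X A) (π : ℤ → X → A) (n : ℕ) (k : ℤ) (u w : X → ℝ) :
    M.Tcomp π n k u - M.Tcomp π n k w = (M.γ ^ n • M.Pcomp π n k).mulVec (u - w) := by
  have h := aux_Tcomp_add M π n k w (u - w)
  rw [add_sub_cancel] at h
  rw [h]; abel

lemma aux_Tcomp_mono (M : MDP X A) (π : ℤ → X → A) :
    ∀ (n : ℕ) (k : ℤ) {u w : X → ℝ}, u ≤ w → M.Tcomp π n k u ≤ M.Tcomp π n k w := by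
  intro n
  induction n with
  | zero => intro k u w h; simpa [MDP.Tcomp] using h
  | succ n ih =>
    intro k u w h
    simp only [MDP.Tcomp]
    exact aux_T_mono M (π k) (ih (k - 1) h)

lemma aux_Tcomp_T (M : MDP X A) (π : ℤ → X → A) :
    ∀ (n : ℕ) (k : ℤ) (w : X → ℝ),
      M.Tcomp π n k (M.T (π (k - n)) w) = M.Tcomp π (n + 1) k w := by
  intro n
  induction n with
  | zero => intro k w; simp [MDP.Tcomp]
  | succ n ih =>
    intro k w
    show M.T (π k) (M.Tcomp π n (k - 1) (M.T (π (k - (n + 1 : ℕ))) w)) = _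
    have hc : (k - (n + 1 : ℕ) : ℤ) = (k - 1) - (n : ℤ) := by push_cast; ring
    rw [hc, ih (k - 1) w]
    rfl

lemma aux_iterate_sub (M : MDP X A) (π : ℤ → X → A) (n : ℕ) (k : ℤ) (u : X → ℝ) (m : ℕ) :
    (M.Tcomp π n k)^[m] u - (M.Tcomp π n k)^[m] (M.Tcomp π n k u)
      = ((M.γ ^ n • M.Pcomp π n k) ^ m).mulVec (u - M.Tcomp π n k u) := by
  induction m with
  | zero => simp [Matrix.one_mulVec]
  | succ m ih =>
    rw [Function.iterate_succ_apply', Function.iterate_succ_apply',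
      aux_Tcomp_sub M π n k, ih, pow_succ', ← Matrix.mulVec_mulVec]

end Aux

/-- One-step residual recursion:
`b_k ≤ γ P_{π_{k+1}} ((γ^ℓ P_{k,ℓ})^m b_{k−1} + (I − γ^ℓ P_{k,ℓ}) ε_k)`. -/
theorem mpi_residual_recursion
    {X A : Type} [Fintype X] [Fintype A] [Nonempty X] [Nonempty A] [DecidableEq X]
    (M : MDP X A)
    (m ℓ : ℕ) (hℓ : 1 ≤ ℓ)
    (v : ℕ → X → ℝ) (π : ℤ → X → A) (err : ℕ → X → ℝ)
    (herr0 : err 0 = fun _ => 0)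
    (hgreedy : ∀ k : ℕ, 1 ≤ k → M.IsGreedyPol (π (k : ℤ)) (v (k - 1)))
    (hv : ∀ k : ℕ, 1 ≤ k →
      v k = fun x => (M.Tcomp π ℓ (k : ℤ))^[m] (M.T (π (k : ℤ)) (v (k - 1))) x + err k x)
    (k : ℕ) (hk : 1 ≤ k) :
    ∀ x, bres M π ℓ v k x ≤
      (M.γ • M.Pmat (π ((k : ℤ) + 1))).mulVec
        (fun y =>
          ((M.γ ^ ℓ • M.Pcomp π ℓ (k : ℤ)) ^ m).mulVec (bres M π ℓ v (k - 1)) y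
            + ((1 : Matrix X X ℝ) - M.γ ^ ℓ • M.Pcomp π ℓ (k : ℤ)).mulVec (err k) y) x := by
  obtain ⟨n, rfl⟩ : ∃ n, ℓ = n + 1 := ⟨ℓ - 1, by omega⟩
  set G : (X → ℝ) → (X → ℝ) := M.Tcomp π (n + 1) (k : ℤ) with hG
  set Γ : Matrix X X ℝ := M.γ ^ (n + 1) • M.Pcomp π (n + 1) (k : ℤ) with hΓ
  set u : X → ℝ := M.T (π (k : ℤ)) (v (k - 1)) with hu
  -- v k = G^[m] u + err k
  have hvk : v k = (G)^[m] u + err k := by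
    funext x
    rw [hv k hk]
    rfl
  -- b_{k-1} = u - G u
  have hK : ((k - 1 : ℕ) : ℤ) + 1 = (k : ℤ) := by omega
  have hb : bres M π (n + 1) v (k - 1) = u - G u := by
    funext x
    simp only [bres, hK, Pi.sub_apply, hu, hG]
  -- b_k as matrix product
  have hbk : bres M π (n + 1) v k
      = (M.γ • M.Pmat (π ((k : ℤ) + 1))).mulVec
          (v k - M.Tcomp π n (k : ℤ) (M.T (π ((k : ℤ) + 1)) (v k))) := by
    funext x
    have hTc : M.Tcomp π (n + 1) ((k : ℤ) + 1) (M.T (π ((k : ℤ) + 1)) (v k))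
        = M.T (π ((k : ℤ) + 1)) (M.Tcomp π n (k : ℤ) (M.T (π ((k : ℤ) + 1)) (v k))) := by
      show M.T (π ((k : ℤ) + 1)) (M.Tcomp π n ((k : ℤ) + 1 - 1) _) = _
      norm_num
    have := aux_Tcomp_sub M π 1 ((k : ℤ) + 1) (v k)
      (M.Tcomp π n (k : ℤ) (M.T (π ((k : ℤ) + 1)) (v k)))
    simp only [MDP.Tcomp, MDP.Pcomp, pow_one, mul_one, id] at this
    calc bres M π (n + 1) v k x
        = (M.T (π ((k : ℤ) + 1)) (v k)
            - M.T (π ((k : ℤ) + 1)) (M.Tcomp π n (k : ℤ) (M.T (π ((k : ℤ) + 1)) (v k)))) x := by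
          simp only [bres, hTc, Pi.sub_apply]
      _ = _ := by rw [this]
  -- greedy step
  have hg : M.T (π ((k : ℤ) - (n : ℤ))) (v k) ≤ M.T (π ((k : ℤ) + 1)) (v k) := by
    have hgp := hgreedy (k + 1) (by omega)
    have hcast : ((k + 1 : ℕ) : ℤ) = (k : ℤ) + 1 := by push_cast; ring
    rw [hcast] at hgp
    intro x
    have := hgp x
    simp only [Nat.add_sub_cancel] at this
    rw [this]
    exact le_ciSup (Finite.bddAbove_range fun π' => M.T π' (v k) x) (π ((k : ℤ) - (n : ℤ)))
  have h2 : G (v k) ≤ M.Tcomp π n (k : ℤ) (M.T (π ((k : ℤ) + 1)) (v k)) := by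
    rw [hG, ← aux_Tcomp_T M π n (k : ℤ) (v k)]
    exact aux_Tcomp_mono M π n (k : ℤ) hg
  have h3 : v k - M.Tcomp π n (k : ℤ) (M.T (π ((k : ℤ) + 1)) (v k)) ≤ v k - G (v k) :=
    sub_le_sub_left h2 (v k)
  -- the identity for v k - G (v k)
  have h4 : v k - G (v k) = (Γ ^ m).mulVec (bres M π (n + 1) v (k - 1))
      + ((1 : Matrix X X ℝ) - Γ).mulVec (err k) := by
    have hGvk : G (v k) = (G)^[m] (G u) + Γ.mulVec (err k) := by
      rw [hvk, hG, aux_Tcomp_add M π (n + 1) (k : ℤ) ((G)^[m] u) (err k), ← hΓ, ← hG]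
      rw [← Function.iterate_succ_apply, Function.iterate_succ_apply']
    rw [hGvk, hvk, hb]
    have h5 := aux_iterate_sub M π (n + 1) (k : ℤ) u m
    rw [← hG, ← hΓ] at h5
    rw [Matrix.sub_mulVec, Matrix.one_mulVec, ← h5]
    abel
  -- conclude
  intro x
  have hfin : (fun y => (Γ ^ m).mulVec (bres M π (n + 1) v (k - 1)) y
        + ((1 : Matrix X X ℝ) - Γ).mulVec (err k) y)
      = (Γ ^ m).mulVec (bres M π (n + 1) v (k - 1))
        + ((1 : Matrix X X ℝ) - Γ).mulVec (err k) := rfl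
  rw [hbk, hfin, ← h4]
  have hnn : ∀ i j, 0 ≤ (M.γ • M.Pmat (π ((k : ℤ) + 1))) i j := fun i j =>
    mul_nonneg (le_of_lt M.γ_pos) (M.P_nonneg i _ j)
  exact aux_mulVec_mono hnn h3 x
end

section
/- (Shift identity.) In non-stationary approximate MPI with parameters m ≥ 0 and ℓ ≥ 1 on a finite MDP, for every k ≥ 1 the shift satisfies the exact pointwise identity s_k = ∑_{j=0}^{∞} (γ^ℓ P_{k,ℓ})^{m+j} b_{k−1}, where P_{k,ℓ} = P_{π_k} P_{π_{k−1}} ⋯ P_{π_{k−ℓ+1}} (the series converges absolutely since γ^ℓ < 1 and P_{k,ℓ} is row-stochastic). -/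
section Aux

open Matrix Finset

variable {X A : Type} [Fintype X] [Fintype A]

/-- A nonneg matrix with row sums 1 applied to a bounded vector stays bounded. -/
lemma mulVec_abs_le (N : Matrix X X ℝ) (hN : ∀ x y, 0 ≤ N x y)
    (hs : ∀ x, ∑ y, N x y = 1) (w : X → ℝ) (C : ℝ) (hw : ∀ y, |w y| ≤ C) (x : X) :
    |N.mulVec w x| ≤ C := by
  have : N.mulVec w x = ∑ y, N x y * w y := by
    simp [Matrix.mulVec, dotProduct]
  rw [this]
  calc |∑ y, N x y * w y| ≤ ∑ y, |N x y * w y| := Finset.abs_sum_le_sum_abs _ _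
    _ ≤ ∑ y, N x y * C := by
        refine Finset.sum_le_sum fun y _ => ?_
        rw [abs_mul, abs_of_nonneg (hN x y)]
        exact mul_le_mul_of_nonneg_left (hw y) (hN x y)
    _ = C := by rw [← Finset.sum_mul, hs, one_mul]

lemma stoch_mul {N N' : Matrix X X ℝ} (hN : ∀ x y, 0 ≤ N x y)
    (hs : ∀ x, ∑ y, N x y = 1) (hN' : ∀ x y, 0 ≤ N' x y) (hs' : ∀ x, ∑ y, N' x y = 1) :
    (∀ x y, 0 ≤ (N * N') x y) ∧ (∀ x, ∑ y, (N * N') x y = 1) := by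
  constructor
  · intro x y
    rw [Matrix.mul_apply]
    exact Finset.sum_nonneg fun z _ => mul_nonneg (hN x z) (hN' z y)
  · intro x
    simp only [Matrix.mul_apply]
    rw [Finset.sum_comm]
    have : ∀ z ∈ Finset.univ, ∑ y, N x z * N' z y = N x z := by
      intro z _
      rw [← Finset.mul_sum, hs' z, mul_one]
    rw [Finset.sum_congr rfl this, hs]

lemma stoch_one [DecidableEq X] :
    (∀ x y, 0 ≤ (1 : Matrix X X ℝ) x y) ∧ (∀ x, ∑ y, (1 : Matrix X X ℝ) x y = 1) := by
  constructor
  · intro x y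
    rw [Matrix.one_apply]
    split <;> norm_num
  · intro x
    simp [Matrix.one_apply]

lemma Pcomp_stoch [DecidableEq X] (M : MDP X A) (π : ℤ → X → A) :
    ∀ (n : ℕ) (k : ℤ), (∀ x y, 0 ≤ M.Pcomp π n k x y) ∧
      (∀ x, ∑ y, M.Pcomp π n k x y = 1) := by
  intro n
  induction n with
  | zero => intro k; simpa [MDP.Pcomp] using (stoch_one (X := X))
  | succ n ih =>
    intro k
    have h1 : ∀ x y, 0 ≤ M.Pmat (π k) x y := fun x y => M.P_nonneg x _ y
    have h2 : ∀ x, ∑ y, M.Pmat (π k) x y = 1 := fun x => M.P_sum x _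
    simpa [MDP.Pcomp] using stoch_mul h1 h2 (ih (k - 1)).1 (ih (k - 1)).2

lemma stoch_pow [DecidableEq X] {N : Matrix X X ℝ} (hN : ∀ x y, 0 ≤ N x y)
    (hs : ∀ x, ∑ y, N x y = 1) (n : ℕ) :
    (∀ x y, 0 ≤ (N ^ n) x y) ∧ (∀ x, ∑ y, (N ^ n) x y = 1) := by
  induction n with
  | zero => simpa using (stoch_one (X := X))
  | succ n ih =>
    rw [pow_succ]
    exact stoch_mul ih.1 ih.2 hN hs

/-- The composed Bellman operator is affine with linear part `γ^n Pcomp`. -/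
lemma Tcomp_sub (M : MDP X A) [DecidableEq X] (π : ℤ → X → A) :
    ∀ (n : ℕ) (k : ℤ) (w w' : X → ℝ) (x : X),
    M.Tcomp π n k w x - M.Tcomp π n k w' x
      = M.γ ^ n * (M.Pcomp π n k).mulVec (fun y => w y - w' y) x := by
  intro n
  induction n with
  | zero =>
    intro k w w' x
    simp [MDP.Tcomp, MDP.Pcomp]
  | succ n ih =>
    intro k w w' x
    have hmv : (M.Pcomp π (n+1) k).mulVec (fun y => w y - w' y) x
        = (M.Pmat (π k)).mulVec ((M.Pcomp π n (k-1)).mulVec (fun y => w y - w' y)) x := by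
      rw [show M.Pcomp π (n+1) k = M.Pmat (π k) * M.Pcomp π n (k-1) from rfl,
        ← Matrix.mulVec_mulVec]
    rw [hmv]
    have : M.Tcomp π (n+1) k w x - M.Tcomp π (n+1) k w' x
        = M.γ * ∑ y, M.P x (π k x) y *
            (M.Tcomp π n (k-1) w y - M.Tcomp π n (k-1) w' y) := by
      simp only [MDP.Tcomp, MDP.T, mul_sub, Finset.sum_sub_distrib]
      ring
    rw [this]
    have : ∑ y, M.P x (π k x) y * (M.Tcomp π n (k-1) w y - M.Tcomp π n (k-1) w' y)
        = ∑ y, M.P x (π k x) y *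
            (M.γ ^ n * (M.Pcomp π n (k-1)).mulVec (fun z => w z - w' z) y) := by
      exact Finset.sum_congr rfl fun y _ => by rw [ih (k-1) w w' y]
    rw [this]
    have hm : (M.Pmat (π k)).mulVec ((M.Pcomp π n (k-1)).mulVec (fun y => w y - w' y)) x
        = ∑ y, M.P x (π k x) y * (M.Pcomp π n (k-1)).mulVec (fun z => w z - w' z) y := by
      simp [Matrix.mulVec, dotProduct, MDP.Pmat]
    rw [hm, Finset.mul_sum, Finset.mul_sum]
    refine Finset.sum_congr rfl fun y _ => by ring

end Aux


lemma iterate_Tcomp_sub {X A : Type} [Fintype X] [Fintype A] [DecidableEq X]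
    (M : MDP X A) (π : ℤ → X → A) (ℓ : ℕ) (k : ℤ) (w w' : X → ℝ) :
    ∀ (m : ℕ) (x : X),
    (M.Tcomp π ℓ k)^[m] w x - (M.Tcomp π ℓ k)^[m] w' x
      = (M.γ ^ ℓ) ^ m * ((M.Pcomp π ℓ k) ^ m).mulVec (fun y => w y - w' y) x := by
  intro m
  induction m with
  | zero => intro x; simp
  | succ m ih =>
    intro x
    rw [Function.iterate_succ_apply', Function.iterate_succ_apply',
      Tcomp_sub M π ℓ k _ _ x]
    have h : (fun y => (M.Tcomp π ℓ k)^[m] w y - (M.Tcomp π ℓ k)^[m] w' y)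
        = (M.γ ^ ℓ) ^ m • ((M.Pcomp π ℓ k) ^ m).mulVec (fun y => w y - w' y) := by
      funext y; rw [ih y]; simp
    rw [h, Matrix.mulVec_smul, Matrix.mulVec_mulVec, ← pow_succ']
    simp only [Pi.smul_apply, smul_eq_mul]
    ring

/-- Shift identity: `s_k = ∑_{j=0}^{∞} (γ^ℓ P_{k,ℓ})^{m+j} b_{k−1}`, the series converging. -/
theorem mpi_shift_identity
    {X A : Type} [Fintype X] [Fintype A] [Nonempty X] [Nonempty A] [DecidableEq X]
    (M : MDP X A)
    (m ℓ : ℕ) (hℓ : 1 ≤ ℓ)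
    (v : ℕ → X → ℝ) (π : ℤ → X → A) (err : ℕ → X → ℝ)
    (herr0 : err 0 = fun _ => 0)
    (hgreedy : ∀ k : ℕ, 1 ≤ k → M.IsGreedyPol (π (k : ℤ)) (v (k - 1)))
    (hv : ∀ k : ℕ, 1 ≤ k →
      v k = fun x => (M.Tcomp π ℓ (k : ℤ))^[m] (M.T (π (k : ℤ)) (v (k - 1))) x + err k x)
    (vns : ℕ → X → ℝ) (hvns : ∀ k : ℕ, 1 ≤ k → M.Tcomp π ℓ (k : ℤ) (vns k) = vns k)
    (k : ℕ) (hk : 1 ≤ k) :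
    (∀ x, Summable fun j : ℕ =>
      ((M.γ ^ ℓ • M.Pcomp π ℓ (k : ℤ)) ^ (m + j)).mulVec (bres M π ℓ v (k - 1)) x) ∧
    ∀ x, v k x - vns k x - err k x =
      ∑' j : ℕ,
        ((M.γ ^ ℓ • M.Pcomp π ℓ (k : ℤ)) ^ (m + j)).mulVec (bres M π ℓ v (k - 1)) x := by
  classical
  set P := M.Pcomp π ℓ (k : ℤ) with hPdef
  set g := M.γ ^ ℓ with hgdef
  have hg0 : 0 ≤ g := pow_nonneg M.γ_pos.le ℓ
  have hg1 : g < 1 := pow_lt_one₀ M.γ_pos.le M.γ_lt_one (by omega)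
  have hPst := Pcomp_stoch M π ℓ (k : ℤ)
  have hkz : ((k - 1 : ℕ) : ℤ) + 1 = (k : ℤ) := by omega
  set u := M.T (π (k : ℤ)) (v (k - 1)) with hu
  set b := bres M π ℓ v (k - 1) with hbdef
  have hb : ∀ x, b x = u x - M.Tcomp π ℓ (k : ℤ) u x := by
    intro x; simp only [hbdef, bres, hkz, hu]
  set e := fun x => u x - vns k x with hE
  have hfix := hvns k hk
  have he' : ∀ x, e x = b x + g * P.mulVec e x := by
    intro x
    have h2 : M.Tcomp π ℓ (k : ℤ) u x - M.Tcomp π ℓ (k : ℤ) (vns k) x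
        = g * P.mulVec e x := by
      have := Tcomp_sub M π ℓ (k : ℤ) u (vns k) x
      rw [← hE] at this
      exact this
    have h3 : M.Tcomp π ℓ (k : ℤ) (vns k) x = vns k x := congrFun hfix x
    have h4 := hb x
    have h5 : e x = u x - vns k x := rfl
    linarith
  have hEfun : e = b + g • P.mulVec e := by
    funext y
    have := he' y
    simpa using this
  -- key recurrence for powers
  have hstep : ∀ (n : ℕ) (x : X), g ^ n * (P ^ n).mulVec e x
      = g ^ n * (P ^ n).mulVec b x + g ^ (n + 1) * (P ^ (n + 1)).mulVec e x := by
    intro n x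
    have h1 : (P ^ n).mulVec e = (P ^ n).mulVec b + g • (P ^ n * P).mulVec e := by
      conv_lhs => rw [hEfun]
      rw [Matrix.mulVec_add, Matrix.mulVec_smul, Matrix.mulVec_mulVec]
    have := congrFun h1 x
    simp only [Pi.add_apply, Pi.smul_apply, smul_eq_mul] at this
    rw [this, ← pow_succ]
    ring
  -- partial sums
  have hpart : ∀ (N : ℕ) (x : X), g ^ m * (P ^ m).mulVec e x
      = (∑ j ∈ Finset.range N, g ^ (m + j) * (P ^ (m + j)).mulVec b x)
        + g ^ (m + N) * (P ^ (m + N)).mulVec e x := by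
    intro N x
    induction N with
    | zero => simp
    | succ N ih =>
      rw [Finset.sum_range_succ]
      rw [ih, hstep (m + N) x]
      rw [show m + (N + 1) = m + N + 1 from rfl]
      ring
  -- bounds
  obtain ⟨x0⟩ := (inferInstance : Nonempty X)
  have hne : (Finset.univ : Finset X).Nonempty := ⟨x0, Finset.mem_univ x0⟩
  set C := Finset.univ.sup' hne (fun y => |b y|) with hCdef
  have hC : ∀ y, |b y| ≤ C := fun y => Finset.le_sup' (fun y => |b y|) (Finset.mem_univ y)
  set Ce := Finset.univ.sup' hne (fun y => |e y|) with hCedef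
  have hCe : ∀ y, |e y| ≤ Ce := fun y => Finset.le_sup' (fun y => |e y|) (Finset.mem_univ y)
  have hPn := fun n => stoch_pow hPst.1 hPst.2 n
  have habsb : ∀ (n : ℕ) (x : X), |(P ^ n).mulVec b x| ≤ C :=
    fun n x => mulVec_abs_le _ (hPn n).1 (hPn n).2 b C hC x
  have habse : ∀ (n : ℕ) (x : X), |(P ^ n).mulVec e x| ≤ Ce :=
    fun n x => mulVec_abs_le _ (hPn n).1 (hPn n).2 e Ce hCe x
  -- summability
  have hsum0 : ∀ x, Summable fun j : ℕ => g ^ (m + j) * (P ^ (m + j)).mulVec b x := by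
    intro x
    refine Summable.of_norm_bounded (g := fun j => (C * g ^ m) * g ^ j)
      ((summable_geometric_of_lt_one hg0 hg1).mul_left _) fun j => ?_
    rw [Real.norm_eq_abs, abs_mul, abs_of_nonneg (pow_nonneg hg0 _), pow_add]
    have h1 : g ^ m * g ^ j * |(P ^ (m + j)).mulVec b x| ≤ g ^ m * g ^ j * C :=
      mul_le_mul_of_nonneg_left (habsb (m + j) x)
        (mul_nonneg (pow_nonneg hg0 _) (pow_nonneg hg0 _))
    exact le_trans h1 (le_of_eq (by ring))
  -- tail tends to zero
  have htail : ∀ x, Filter.Tendsto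
      (fun N : ℕ => g ^ (m + N) * (P ^ (m + N)).mulVec e x)
      Filter.atTop (nhds 0) := by
    intro x
    have hlim : Filter.Tendsto (fun N : ℕ => (Ce * g ^ m) * g ^ N)
        Filter.atTop (nhds 0) := by
      have := (tendsto_pow_atTop_nhds_zero_of_lt_one hg0 hg1).const_mul (Ce * g ^ m)
      simpa using this
    refine squeeze_zero_norm (fun N => ?_) hlim
    rw [Real.norm_eq_abs, abs_mul, abs_of_nonneg (pow_nonneg hg0 _), pow_add]
    have h1 : g ^ m * g ^ N * |(P ^ (m + N)).mulVec e x| ≤ g ^ m * g ^ N * Ce :=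
      mul_le_mul_of_nonneg_left (habse (m + N) x)
        (mul_nonneg (pow_nonneg hg0 _) (pow_nonneg hg0 _))
    exact le_trans h1 (le_of_eq (by ring))
  -- tsum value
  have htsum : ∀ x, (∑' j : ℕ, g ^ (m + j) * (P ^ (m + j)).mulVec b x)
      = g ^ m * (P ^ m).mulVec e x := by
    intro x
    have h2 := (hsum0 x).hasSum.tendsto_sum_nat
    have h3 : Filter.Tendsto
        (fun N : ℕ => ∑ j ∈ Finset.range N, g ^ (m + j) * (P ^ (m + j)).mulVec b x)
        Filter.atTop (nhds (g ^ m * (P ^ m).mulVec e x)) := by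
      have heq : (fun N : ℕ => ∑ j ∈ Finset.range N, g ^ (m + j) * (P ^ (m + j)).mulVec b x)
          = fun N : ℕ => g ^ m * (P ^ m).mulVec e x
              - g ^ (m + N) * (P ^ (m + N)).mulVec e x := by
        funext N
        have := hpart N x
        linarith
      rw [heq]
      simpa using (htail x).const_sub (g ^ m * (P ^ m).mulVec e x)
    exact tendsto_nhds_unique h2 h3
  -- translate powers of smul matrix
  have hQ : ∀ (n : ℕ) (x : X), ((g • P) ^ n).mulVec b x = g ^ n * (P ^ n).mulVec b x := by
    intro n x
    rw [smul_pow, Matrix.smul_mulVec]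
    simp
  constructor
  · intro x
    exact (hsum0 x).congr fun j => (hQ (m + j) x).symm
  · intro x
    have hvk : v k x - err k x = (M.Tcomp π ℓ (k : ℤ))^[m] u x := by
      have := congrFun (hv k hk) x
      simp only [this]
      ring
    have hfx : (M.Tcomp π ℓ (k : ℤ))^[m] (vns k) = vns k := Function.iterate_fixed hfix m
    have hit : (M.Tcomp π ℓ (k : ℤ))^[m] u x - (M.Tcomp π ℓ (k : ℤ))^[m] (vns k) x
        = g ^ m * (P ^ m).mulVec e x := by
      have := iterate_Tcomp_sub M π ℓ (k : ℤ) u (vns k) m x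
      rw [← hE] at this
      exact this
    have hval : v k x - vns k x - err k x = g ^ m * (P ^ m).mulVec e x := by
      rw [hfx] at hit
      linarith
    rw [hval, ← htsum x]
    exact tsum_congr fun j => (hQ (m + j) x).symm
end
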